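/- Let f : A → C be a morphism of cocommutative Hopf algebras over a field k, and let HKer(f) = {x ∈ A | x₁ ⊗ f(x₂) = x ⊗ 1_C} be its Hopf kernel. Then HKer(f) is a normal Hopf subalgebra of A: for all a ∈ A and x ∈ HKer(f), the element a₁ x S(a₂) lies in HKer(f). -/

import Mathlib

open TensorProduct

/-- The adjoint action `a ⊗ x ↦ a₁ x S(a₂)` of a Hopf algebra on itself. -/
noncomputable def adjointAction (k H : Type u) [Field k] [Ring H] [HopfAlgebra k H] :
    H ⊗[k] H →ₗ[k] H :=
  LinearMap.mul' k H ∘ₗ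
    TensorProduct.map (LinearMap.mul' k H) (HopfAlgebra.antipode (R := k)) ∘ₗ
    (TensorProduct.assoc k H H H).symm.toLinearMap ∘ₗ
    LinearMap.lTensor H (TensorProduct.comm k H H).toLinearMap ∘ₗ
    (TensorProduct.assoc k H H H).toLinearMap ∘ₗ
    LinearMap.rTensor H (Coalgebra.comul (R := k) (A := H))

/-- A subspace of a Hopf algebra is a Hopf subalgebra if it contains `1`, is closed under
multiplication and the antipode, and its comultiplication lands in (the image of) `S ⊗ S`. -/
def IsHopfSubalgebra {k H : Type u} [Field k] [Ring H] [HopfAlgebra k H]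
    (S : Submodule k H) : Prop :=
  (1 : H) ∈ S ∧ (∀ x ∈ S, ∀ y ∈ S, x * y ∈ S) ∧
  (∀ x ∈ S, Coalgebra.comul (R := k) x ∈
    Submodule.span k {z : H ⊗[k] H | ∃ a ∈ S, ∃ b ∈ S, z = a ⊗ₜ[k] b}) ∧
  (∀ x ∈ S, HopfAlgebra.antipode (R := k) x ∈ S)

/-- A Hopf subalgebra is normal when it is closed under the adjoint action. -/
def IsNormalHopfSubalgebra {k H : Type u} [Field k] [Ring H] [HopfAlgebra k H]
    (S : Submodule k H) : Prop :=
  IsHopfSubalgebra S ∧ ∀ a : H, ∀ x ∈ S, adjointAction k H (a ⊗ₜ[k] x) ∈ S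

open Coalgebra LinearMap

noncomputable section ConvAux

variable {k : Type*} [CommSemiring k]
variable {A : Type*} [AddCommMonoid A] [Module k A] [Coalgebra k A]
variable {B : Type*} [Semiring B] [Algebra k B]

/-- Convolution product on linear maps from a coalgebra to an algebra. -/
def convMul (T U : A →ₗ[k] B) : A →ₗ[k] B :=
  LinearMap.mul' k B ∘ₗ TensorProduct.map T U ∘ₗ Coalgebra.comul

lemma convMul_repr (T U : A →ₗ[k] B) {a : A} {ι : Type*} (r : Coalgebra.Repr k a ι) :
    convMul T U a = ∑ i ∈ r.index, T (r.left i) * U (r.right i) := by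
  simp only [_root_.convMul, LinearMap.comp_apply, ← r.eq, map_sum, TensorProduct.map_tmul,
    LinearMap.mul'_apply]

/-- Convolution unit. -/
def convOne : A →ₗ[k] B := Algebra.linearMap k B ∘ₗ Coalgebra.counit

lemma sum_counit_right_smul {a : A} {ι : Type*} (r : Coalgebra.Repr k a ι) :
    ∑ i ∈ r.index, Coalgebra.counit (R := k) (r.right i) • r.left i = a := by
  have h := Coalgebra.sum_tmul_counit_eq r
  apply_fun (TensorProduct.rid k A) at h
  simp only [map_sum, TensorProduct.rid_tmul, one_smul] at h
  exact h

lemma sum_counit_left_smul {a : A} {ι : Type*} (r : Coalgebra.Repr k a ι) :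
    ∑ i ∈ r.index, Coalgebra.counit (R := k) (r.left i) • r.right i = a := by
  have h := Coalgebra.sum_counit_tmul_eq r
  apply_fun (TensorProduct.lid k A) at h
  simp only [map_sum, TensorProduct.lid_tmul, one_smul] at h
  exact h

lemma convMul_one (T : A →ₗ[k] B) : convMul T (convOne (k:=k) (A:=A) (B:=B)) = T := by
  ext a
  rw [convMul_repr T _ (ℛ k a)]
  have : ∀ i ∈ (ℛ k a).index, T ((ℛ k a).left i) * convOne (k:=k) (B:=B) ((ℛ k a).right i)
      = Coalgebra.counit (R := k) ((ℛ k a).right i) • T ((ℛ k a).left i) := by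
    intro i _
    simp [_root_.convOne, Algebra.algebraMap_eq_smul_one, mul_smul_comm]
  rw [Finset.sum_congr rfl this]
  simp_rw [← map_smul]
  rw [← map_sum, sum_counit_right_smul]

lemma one_convMul (T : A →ₗ[k] B) : convMul (convOne (k:=k) (A:=A) (B:=B)) T = T := by
  ext a
  rw [convMul_repr _ T (ℛ k a)]
  have : ∀ i ∈ (ℛ k a).index, convOne (k:=k) (B:=B) ((ℛ k a).left i) * T ((ℛ k a).right i)
      = Coalgebra.counit (R := k) ((ℛ k a).left i) • T ((ℛ k a).right i) := by
    intro i _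
    simp [_root_.convOne, Algebra.algebraMap_eq_smul_one, smul_mul_assoc]
  rw [Finset.sum_congr rfl this]
  simp_rw [← map_smul]
  rw [← map_sum, sum_counit_left_smul]

lemma convMul_assoc (T U V : A →ₗ[k] B) :
    convMul (convMul T U) V = convMul T (convMul U V) := by
  ext a
  set r := ℛ k a with hr
  set r₁ : ∀ i, Coalgebra.Repr k (r.left i) (A × A) := fun i => ℛ k (r.left i) with hr₁
  set r₂ : ∀ i, Coalgebra.Repr k (r.right i) (A × A) := fun i => ℛ k (r.right i) with hr₂
  rw [convMul_repr _ _ r, convMul_repr _ _ r]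
  have h1 : ∀ i ∈ r.index, convMul T U (r.left i) * V (r.right i)
      = ∑ j ∈ (r₁ i).index, T ((r₁ i).left j) * U ((r₁ i).right j) * V (r.right i) := by
    intro i _
    rw [convMul_repr T U (r₁ i), Finset.sum_mul]
  have h2 : ∀ i ∈ r.index, T (r.left i) * convMul U V (r.right i)
      = ∑ j ∈ (r₂ i).index, T (r.left i) * (U ((r₂ i).left j) * V ((r₂ i).right j)) := by
    intro i _
    rw [convMul_repr U V (r₂ i), Finset.mul_sum]
  rw [Finset.sum_congr rfl h1, Finset.sum_congr rfl h2]
  have key := Coalgebra.sum_map_tmul_tmul_eq (R := k) T U V a (repr := r) (a₁ := r₁) (a₂ := r₂)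
  apply_fun (LinearMap.mul' k B ∘ₗ LinearMap.lTensor B (LinearMap.mul' k B)) at key
  simpa [map_sum, mul_assoc] using key.symm

end ConvAux

noncomputable section HopfAux

variable {k A C : Type*} [Field k] [Ring A] [Ring C]
  [HopfAlgebra k A] [HopfAlgebra k C]

/-- `a ↦ a₁ ⊗ f(a₂)`. -/
def psiMap (f : A →ₐc[k] C) : A →ₗ[k] A ⊗[k] C :=
  LinearMap.lTensor A (f : A →ₗ[k] C) ∘ₗ Coalgebra.comul

/-- `a ↦ a ⊗ 1`. -/
def phiMap : A →ₗ[k] A ⊗[k] C := (TensorProduct.mk k A C).flip 1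

/-- `a ↦ S(a) ⊗ 1`. -/
def phiMap' : A →ₗ[k] A ⊗[k] C := phiMap ∘ₗ HopfAlgebra.antipode (R := k)

/-- `a ↦ 1 ⊗ f(a)`. -/
def thetaMap (f : A →ₐc[k] C) : A →ₗ[k] A ⊗[k] C :=
  TensorProduct.mk k A C 1 ∘ₗ (f : A →ₗ[k] C)

/-- `a ↦ 1 ⊗ f(S(a))`. -/
def thetaMap' (f : A →ₐc[k] C) : A →ₗ[k] A ⊗[k] C :=
  thetaMap f ∘ₗ HopfAlgebra.antipode (R := k)

/-- `a ↦ ε(a) • (x ⊗ 1)`. -/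
def rhoMap (x : A) : A →ₗ[k] A ⊗[k] C :=
  LinearMap.toSpanSingleton k _ (x ⊗ₜ[k] (1 : C)) ∘ₗ Coalgebra.counit

@[simp] lemma phiMap_apply (a : A) : phiMap (k := k) (C := C) a = a ⊗ₜ[k] (1 : C) := rfl

@[simp] lemma phiMap'_apply (a : A) :
    phiMap' (k := k) (C := C) a = (HopfAlgebra.antipode (R := k) a) ⊗ₜ[k] (1 : C) := rfl

@[simp] lemma thetaMap_apply (f : A →ₐc[k] C) (a : A) :
    thetaMap f a = (1 : A) ⊗ₜ[k] f a := rfl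

@[simp] lemma thetaMap'_apply (f : A →ₐc[k] C) (a : A) :
    thetaMap' f a = (1 : A) ⊗ₜ[k] f (HopfAlgebra.antipode (R := k) a) := rfl

@[simp] lemma rhoMap_apply (x a : A) :
    rhoMap (k := k) (C := C) x a = Coalgebra.counit (R := k) a • (x ⊗ₜ[k] (1 : C)) := rfl

@[simp] lemma convOne_apply (a : A) :
    convOne (k := k) (A := A) (B := A ⊗[k] C) a =
      Coalgebra.counit (R := k) a • (1 : A ⊗[k] C) := by
  simp [_root_.convOne, Algebra.algebraMap_eq_smul_one]

lemma lTensor_coe_mul (f : A →ₐc[k] C) (z w : A ⊗[k] A) :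
    LinearMap.lTensor A (f : A →ₗ[k] C) (z * w) =
      LinearMap.lTensor A (f : A →ₗ[k] C) z * LinearMap.lTensor A (f : A →ₗ[k] C) w := by
  have h : LinearMap.lTensor A (f : A →ₗ[k] C) =
      (Algebra.TensorProduct.map (AlgHom.id k A) (f : A →ₐ[k] C)).toLinearMap := by
    apply TensorProduct.ext'
    intro u v
    rfl
  rw [h]
  simp only [AlgHom.toLinearMap_apply]
  exact map_mul _ z w

lemma psiMap_mul (f : A →ₐc[k] C) (u v : A) :
    psiMap f (u * v) = psiMap f u * psiMap f v := by
  simp only [psiMap, LinearMap.comp_apply, Bialgebra.comul_mul, lTensor_coe_mul]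

@[simp] lemma psiMap_one (f : A →ₐc[k] C) : psiMap f 1 = 1 := by
  simp only [psiMap, LinearMap.comp_apply, Bialgebra.comul_one]
  rw [Algebra.TensorProduct.one_def]
  simp [Algebra.TensorProduct.one_def]

variable (f : A →ₐc[k] C) (x : A)

lemma conv_phi_theta : convMul phiMap (thetaMap f) = psiMap f := by
  ext a
  rw [convMul_repr _ _ (ℛ k a)]
  simp only [phiMap_apply, thetaMap_apply, Algebra.TensorProduct.tmul_mul_tmul, one_mul, mul_one]
  rw [psiMap, LinearMap.comp_apply, ← (ℛ k a).eq, map_sum]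
  simp [LinearMap.lTensor_tmul]

lemma conv_theta_theta' : convMul (thetaMap f) (thetaMap' f) = convOne (k:=k) (A:=A) (B:=A ⊗[k] C) := by
  ext a
  rw [convMul_repr _ _ (ℛ k a), _root_.convOne_apply]
  simp only [thetaMap_apply, thetaMap'_apply, Algebra.TensorProduct.tmul_mul_tmul, one_mul,
    ← map_mul]
  rw [← TensorProduct.tmul_sum, ← map_sum, HopfAlgebra.sum_mul_antipode_eq_smul,
    map_smul, map_one, TensorProduct.tmul_smul, ← Algebra.TensorProduct.one_def]

lemma conv_theta'_theta : convMul (thetaMap' f) (thetaMap f) = convOne (k:=k) (A:=A) (B:=A ⊗[k] C) := by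
  ext a
  rw [convMul_repr _ _ (ℛ k a), _root_.convOne_apply]
  simp only [thetaMap_apply, thetaMap'_apply, Algebra.TensorProduct.tmul_mul_tmul, one_mul,
    ← map_mul]
  rw [← TensorProduct.tmul_sum, ← map_sum, HopfAlgebra.sum_antipode_mul_eq_smul,
    map_smul, map_one, TensorProduct.tmul_smul, ← Algebra.TensorProduct.one_def]

lemma conv_phi'_phi : convMul (phiMap' (k := k) (C := C)) phiMap = convOne (k:=k) (A:=A) (B:=A ⊗[k] C) := by
  ext a
  rw [convMul_repr _ _ (ℛ k a), _root_.convOne_apply]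
  simp only [phiMap_apply, phiMap'_apply, Algebra.TensorProduct.tmul_mul_tmul, one_mul, mul_one]
  rw [← TensorProduct.sum_tmul, HopfAlgebra.sum_antipode_mul_eq_smul,
    ← TensorProduct.smul_tmul', ← Algebra.TensorProduct.one_def]

lemma conv_psi_antipode :
    convMul (psiMap f) (psiMap f ∘ₗ HopfAlgebra.antipode (R := k)) = convOne (k:=k) (A:=A) (B:=A ⊗[k] C) := by
  ext a
  rw [convMul_repr _ _ (ℛ k a), _root_.convOne_apply]
  simp only [LinearMap.comp_apply, ← psiMap_mul]
  rw [← map_sum, HopfAlgebra.sum_mul_antipode_eq_smul, map_smul, psiMap_one]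

lemma conv_G_psi :
    convMul (convMul (thetaMap' f) phiMap') (psiMap f) = convOne (k:=k) (A:=A) (B:=A ⊗[k] C) := by
  rw [← conv_phi_theta f, convMul_assoc, ← convMul_assoc (phiMap') phiMap (thetaMap f),
    conv_phi'_phi, one_convMul, conv_theta'_theta]

lemma antipode_eq :
    psiMap f ∘ₗ HopfAlgebra.antipode (R := k) = convMul (thetaMap' f) phiMap' := by
  have := calc
    convMul (thetaMap' f) phiMap'
        = convMul (convMul (thetaMap' f) phiMap') convOne := (convMul_one _).symm
    _ = convMul (convMul (thetaMap' f) phiMap')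
          (convMul (psiMap f) (psiMap f ∘ₗ HopfAlgebra.antipode (R := k))) := by
        rw [conv_psi_antipode]
    _ = convMul (convMul (convMul (thetaMap' f) phiMap') (psiMap f))
          (psiMap f ∘ₗ HopfAlgebra.antipode (R := k)) := (convMul_assoc _ _ _).symm
    _ = convMul convOne (psiMap f ∘ₗ HopfAlgebra.antipode (R := k)) := by rw [conv_G_psi]
    _ = psiMap f ∘ₗ HopfAlgebra.antipode (R := k) := one_convMul _
  exact this.symm

lemma conv_psi_rho :
    convMul (psiMap f) (rhoMap x) =
      LinearMap.mulRight k (x ⊗ₜ[k] (1 : C)) ∘ₗ psiMap f := by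
  ext a
  rw [convMul_repr _ _ (ℛ k a)]
  simp only [rhoMap_apply, LinearMap.comp_apply, LinearMap.mulRight_apply]
  simp_rw [mul_smul_comm, ← smul_mul_assoc]
  rw [← Finset.sum_mul]
  simp_rw [← map_smul]
  rw [← map_sum, sum_counit_right_smul]

lemma conv_theta_rho :
    convMul (thetaMap f) (rhoMap x) = convMul (rhoMap x) (thetaMap f) := by
  ext a
  rw [convMul_repr _ _ (ℛ k a), convMul_repr _ _ (ℛ k a)]
  simp only [thetaMap_apply, rhoMap_apply, mul_smul_comm, smul_mul_assoc,
    Algebra.TensorProduct.tmul_mul_tmul, one_mul, mul_one]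
  simp_rw [← TensorProduct.tmul_smul, ← map_smul]
  rw [← TensorProduct.tmul_sum, ← TensorProduct.tmul_sum, ← map_sum, ← map_sum,
    sum_counit_right_smul, sum_counit_left_smul]

lemma conv_phi_rho :
    convMul (phiMap (k := k) (C := C)) (rhoMap x) = phiMap ∘ₗ LinearMap.mulRight k x := by
  ext a
  rw [convMul_repr _ _ (ℛ k a)]
  simp only [phiMap_apply, rhoMap_apply, LinearMap.comp_apply, LinearMap.mulRight_apply,
    mul_smul_comm, Algebra.TensorProduct.tmul_mul_tmul, mul_one]
  simp_rw [TensorProduct.smul_tmul', ← smul_mul_assoc]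
  rw [← TensorProduct.sum_tmul, ← Finset.sum_mul, sum_counit_right_smul]

lemma main_chain :
    convMul (LinearMap.mulRight k (x ⊗ₜ[k] (1 : C)) ∘ₗ psiMap f)
        (psiMap f ∘ₗ HopfAlgebra.antipode (R := k)) =
      convMul (phiMap ∘ₗ LinearMap.mulRight k x) phiMap' := by
  rw [← conv_psi_rho, antipode_eq, ← conv_phi_theta,
    convMul_assoc phiMap (thetaMap f) (rhoMap x), conv_theta_rho,
    ← convMul_assoc phiMap (rhoMap x) (thetaMap f),
    convMul_assoc (convMul phiMap (rhoMap x)) (thetaMap f) _,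
    ← convMul_assoc (thetaMap f) (thetaMap' f) phiMap',
    conv_theta_theta', one_convMul, conv_phi_rho]

end HopfAux


theorem stmt_16 {k A C : Type u} [Field k] [Ring A] [Ring C]
    [HopfAlgebra k A] [HopfAlgebra k C]
    (hcocA : ∀ x : A, (TensorProduct.comm k A A) (Coalgebra.comul (R := k) x) =
      Coalgebra.comul (R := k) x)
    (hcocC : ∀ x : C, (TensorProduct.comm k C C) (Coalgebra.comul (R := k) x) =
      Coalgebra.comul (R := k) x)
    (f : A →ₐc[k] C)
    (HK : Set A)
    (hHK : HK = {x : A | LinearMap.lTensor A (f : A →ₗ[k] C) (Coalgebra.comul (R := k) x) =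
      x ⊗ₜ[k] (1 : C)}) :
    ∀ a : A, ∀ x ∈ HK, adjointAction k A (a ⊗ₜ[k] x) ∈ HK := by
  subst hHK
  intro a x hx
  simp only [Set.mem_setOf_eq] at hx ⊢
  have hPsix : psiMap f x = x ⊗ₜ[k] (1 : C) := hx
  set r := ℛ k a with hrdef
  have step1 : adjointAction k A (a ⊗ₜ[k] x) =
      ∑ i ∈ r.index, r.left i * x * HopfAlgebra.antipode (R := k) (r.right i) := by
    rw [adjointAction]
    set_option synthInstance.maxHeartbeats 1000000 in
    simp only [LinearMap.comp_apply, LinearEquiv.coe_coe, LinearMap.rTensor_tmul]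
    rw [← r.eq]
    simp only [TensorProduct.sum_tmul, map_sum, LinearEquiv.coe_coe, TensorProduct.assoc_tmul,
      LinearMap.lTensor_tmul, TensorProduct.comm_tmul, TensorProduct.assoc_symm_tmul,
      TensorProduct.map_tmul, LinearMap.mul'_apply]
  calc LinearMap.lTensor A (f : A →ₗ[k] C)
        (Coalgebra.comul (R := k) (adjointAction k A (a ⊗ₜ[k] x)))
      = psiMap f (adjointAction k A (a ⊗ₜ[k] x)) := rfl
    _ = convMul (LinearMap.mulRight k (x ⊗ₜ[k] (1 : C)) ∘ₗ psiMap f)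
          (psiMap f ∘ₗ HopfAlgebra.antipode (R := k)) a := by
        rw [step1, map_sum, convMul_repr _ _ r]
        refine Finset.sum_congr rfl fun i _ => ?_
        rw [psiMap_mul, psiMap_mul, hPsix]
        rfl
    _ = convMul (phiMap ∘ₗ LinearMap.mulRight k x) phiMap' a := by rw [main_chain]
    _ = adjointAction k A (a ⊗ₜ[k] x) ⊗ₜ[k] (1 : C) := by
        rw [convMul_repr _ _ r, step1]
        simp only [LinearMap.comp_apply, LinearMap.mulRight_apply, phiMap_apply,
          phiMap'_apply, Algebra.TensorProduct.tmul_mul_tmul, mul_one]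
        rw [TensorProduct.sum_tmul]
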